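/- For every ℓ ≥ 1, every permutation of {1,…,k^ℓ} attainable from k^ℓ chips has at most (k^{2ℓ} − ℓ·k^{ℓ+1} + (ℓ−1)·k^ℓ)/4 inversions. -/

import Mathlib

/-- A firing step for `N` labeled chips on the infinite directed `k`-ary tree with
vertex set `{1, 2, 3, …}`, root `1`, where the `j`-th child (`1 ≤ j ≤ k`) of vertex `v`
is `k*(v-1)+j+1`.  A configuration assigns to each chip (element of `Fin N`,
representing labels `1,…,N`) a vertex.  A step picks `k` chips `t 0 < t 1 < ⋯ < t (k-1)`
all on a common vertex `v` and sends the `j`-th smallest to the `j`-th child. -/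
def FireStep (k N : ℕ) (c c' : Fin N → ℕ) : Prop :=
  ∃ (v : ℕ) (t : Fin k → Fin N),
    StrictMono t ∧
    (∀ j, c (t j) = v) ∧
    (∀ j : Fin k, c' (t j) = k * (v - 1) + (j : ℕ) + 2) ∧
    (∀ i : Fin N, (∀ j, i ≠ t j) → c' i = c i)

/-- Reachable from the initial configuration of `k^ℓ` chips all on the root. -/
def Reachable (k ℓ : ℕ) (c : Fin (k ^ ℓ) → ℕ) : Prop :=
  Relation.ReflTransGen (FireStep k (k ^ ℓ)) (fun _ => 1) c

/-- A configuration is stable if every vertex holds fewer than `k` chips. -/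
def Stable (k N : ℕ) (c : Fin N → ℕ) : Prop :=
  ∀ v : ℕ, (Finset.univ.filter (fun i => c i = v)).card < k

/-- `layerStart k m` is the leftmost (smallest-numbered) vertex on layer `m+1`;
the vertices of layer `m+1` read left to right are `layerStart k m + p` for `0 ≤ p < k^m`. -/
def layerStart (k : ℕ) : ℕ → ℕ
  | 0 => 1
  | m + 1 => k * (layerStart k m - 1) + 2

/-- `σ` is the permutation associated to some reachable stable configuration of `k^ℓ`
chips: `σ p` (0-based, representing label `σ p + 1`) is the chip on the `p`-th leftmost
vertex of layer `ℓ+1`. -/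
def Attainable (k ℓ : ℕ) (σ : Equiv.Perm (Fin (k ^ ℓ))) : Prop :=
  ∃ c : Fin (k ^ ℓ) → ℕ, Reachable k ℓ c ∧ Stable k (k ^ ℓ) c ∧
    ∀ p : Fin (k ^ ℓ), c (σ p) = layerStart k ℓ + (p : ℕ)

namespace Stmt8Aux

def anc (k u : ℕ) : ℕ := (u - 2) / k + 1

def depth (k : ℕ) : ℕ → ℕ
  | 0 => 0
  | 1 => 0
  | (u+2) => depth k (u / k + 1) + 1
termination_by u => u
decreasing_by have := Nat.div_le_self u k; omega

lemma anc_eq (k x : ℕ) : anc k (x + 2) = x / k + 1 := by simp [anc]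

lemma depth_succ_succ (k u : ℕ) : depth k (u + 2) = depth k (u / k + 1) + 1 := by
  rw [depth]

lemma depth_one (k : ℕ) : depth k 1 = 0 := by rw [depth]

lemma depth_two_le (k u : ℕ) (hu : 2 ≤ u) : depth k u = depth k (anc k u) + 1 := by
  obtain ⟨m, rfl⟩ : ∃ m, u = m + 2 := ⟨u - 2, by omega⟩
  rw [anc_eq, depth_succ_succ]

lemma anc_child (k v j : ℕ) (hk : 1 ≤ k) (hv : 1 ≤ v) (hj : j < k) :
    anc k (k * (v-1) + j + 2) = v := by
  have h1 : k * (v-1) + j + 2 - 2 = k * (v-1) + j := by omega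
  unfold anc
  rw [h1, Nat.mul_add_div (by omega), Nat.div_eq_of_lt hj]
  omega

lemma depth_child (k v j : ℕ) (hk : 1 ≤ k) (hv : 1 ≤ v) (hj : j < k) :
    depth k (k * (v-1) + j + 2) = depth k v + 1 := by
  rw [depth_two_le k _ (by omega), anc_child k v j hk hv hj]

def Sub (k u w : ℕ) : Prop :=
  depth k u ≤ depth k w ∧ (anc k)^[depth k w - depth k u] w = u

lemma sub_refl (k u : ℕ) : Sub k u u := ⟨le_rfl, by simp⟩

lemma sub_child (k v j : ℕ) (hk : 1 ≤ k) (hv : 1 ≤ v) (hj : j < k) :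
    Sub k v (k * (v-1) + j + 2) := by
  refine ⟨by rw [depth_child k v j hk hv hj]; omega, ?_⟩
  rw [depth_child k v j hk hv hj, Nat.add_sub_cancel_left]
  simpa using anc_child k v j hk hv hj

lemma sub_trans {k u w z : ℕ} (h1 : Sub k u w) (h2 : Sub k w z) : Sub k u z := by
  obtain ⟨ha, hb⟩ := h1
  obtain ⟨hc, hd⟩ := h2
  refine ⟨ha.trans hc, ?_⟩
  have he : depth k z - depth k u = (depth k w - depth k u) + (depth k z - depth k w) := by omega
  rw [he, Function.iterate_add_apply, hd, hb]

lemma sub_unique {k a b c : ℕ} (h1 : Sub k a c) (h2 : Sub k b c)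
    (hd : depth k a = depth k b) : a = b := by
  rw [← h1.2, ← h2.2, hd]

lemma sub_eq_of_depth {k a b : ℕ} (h : Sub k a b) (hd : depth k a = depth k b) : a = b := by
  have h2 := h.2
  rw [hd, Nat.sub_self] at h2
  simpa using h2.symm

lemma sub_depth_le {k a b : ℕ} (h : Sub k a b) : depth k a ≤ depth k b := h.1

lemma one_le_layerStart (k : ℕ) : ∀ m, 1 ≤ layerStart k m
  | 0 => le_rfl
  | (m+1) => by simp [layerStart]

lemma depth_layerStart (k : ℕ) (hk : 1 ≤ k) : ∀ m p, p < k ^ m → depth k (layerStart k m + p) = m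
  | 0, p, hp => by
    have : p = 0 := by simpa using hp
    subst this
    simpa [layerStart] using depth_one k
  | (m+1), p, hp => by
    have hL := one_le_layerStart k m
    have h2 : layerStart k (m+1) + p = (k * (layerStart k m - 1) + p) + 2 := by
      simp [layerStart]; omega
    rw [h2, depth_succ_succ]
    have h3 : (k * (layerStart k m - 1) + p) / k + 1 = layerStart k m + p / k := by
      rw [Nat.mul_add_div (by omega)]; omega
    rw [h3, depth_layerStart k hk m (p / k) (by
      have : p < k ^ m * k := by rw [← pow_succ]; exact hp
      exact Nat.div_lt_of_lt_mul (by rwa [mul_comm] at this))]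

lemma iter_anc (k : ℕ) (hk : 1 ≤ k) :
    ∀ (r m p : ℕ), p < k ^ (m + r) →
      (anc k)^[r] (layerStart k (m + r) + p) = layerStart k m + p / k ^ r
  | 0, m, p, _ => by simp
  | (r+1), m, p, hp => by
    have hL := one_le_layerStart k (m + r)
    have e0 : m + (r + 1) = (m + r) + 1 := by omega
    have e1 : layerStart k ((m+r)+1) + p = (k * (layerStart k (m+r) - 1) + p) + 2 := by
      simp [layerStart]; omega
    rw [e0, Function.iterate_succ_apply, e1, anc_eq]
    have h3 : (k * (layerStart k (m+r) - 1) + p) / k + 1 = layerStart k (m+r) + p / k := by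
      rw [Nat.mul_add_div (by omega)]; omega
    rw [h3, iter_anc k hk r m (p / k) (by
      have : p < k ^ (m + r) * k := by rw [← pow_succ, ← e0]; exact hp
      exact Nat.div_lt_of_lt_mul (by rwa [mul_comm] at this))]
    congr 1
    rw [Nat.div_div_eq_div_mul, pow_succ, mul_comm]

lemma sub_layer {k L u p : ℕ} (hk : 1 ≤ k) (hp : p < k ^ L)
    (h : Sub k u (layerStart k L + p)) :
    u = layerStart k (depth k u) + p / k ^ (L - depth k u) := by
  have hdL : depth k (layerStart k L + p) = L := depth_layerStart k hk L p hp
  obtain ⟨h1, h2⟩ := h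
  rw [hdL] at h1 h2
  have he : depth k u + (L - depth k u) = L := by omega
  have h4 := iter_anc k hk (L - depth k u) (depth k u) p (by rwa [he])
  rw [he] at h4
  exact h2.symm.trans h4




structure Run (k M : ℕ) where
  n : ℕ
  f : ℕ → Fin M → ℕ
  vv : ℕ → ℕ
  tt : ℕ → Fin k → Fin M
  h0 : f 0 = fun _ => 1
  hconst : ∀ s, n ≤ s → f s = f n
  hmono : ∀ s, s < n → StrictMono (tt s)
  hat : ∀ s, s < n → ∀ j, f s (tt s j) = vv s
  hfire : ∀ s, s < n → ∀ j : Fin k, f (s+1) (tt s j) = k * (vv s - 1) + (j : ℕ) + 2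
  hstay : ∀ s, s < n → ∀ i : Fin M, (∀ j, i ≠ tt s j) → f (s+1) i = f s i

lemma exists_run {k M : ℕ} (hM : 0 < M) {c : Fin M → ℕ}
    (h : Relation.ReflTransGen (FireStep k M) (fun _ => 1) c) :
    ∃ R : Run k M, R.f R.n = c := by
  classical
  obtain ⟨n, f, h0, hn, hstep, hcst⟩ : ∃ (n : ℕ) (f : ℕ → Fin M → ℕ),
      f 0 = (fun _ => 1) ∧ f n = c ∧ (∀ s, s < n → FireStep k M (f s) (f (s+1))) ∧
      (∀ s, n ≤ s → f s = f n) := by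
    clear hM
    induction h with
    | refl => exact ⟨0, fun _ => (fun _ => 1), rfl, rfl, by omega, fun _ _ => rfl⟩
    | @tail b c' hab hbc ih =>
      obtain ⟨n, f, h0, hn, hstep, hcst⟩ := ih
      refine ⟨n + 1, fun s => if s ≤ n then f s else c', by simp [h0], by simp, ?_, ?_⟩
      · intro s hs
        rcases lt_or_eq_of_le (Nat.lt_succ_iff.mp hs) with hlt | heq
        · simpa [Nat.le_of_lt hlt, Nat.succ_le_of_lt hlt] using hstep s hlt
        · subst heq
          simpa [hn] using hbc
      · intro s hs
        simp [Nat.not_le.mpr (Nat.lt_of_lt_of_le (Nat.lt_succ_self n) hs),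
          Nat.not_le.mpr (Nat.lt_succ_self n)]
  have hch : ∀ s, s < n → ∃ z : ℕ × (Fin k → Fin M), StrictMono z.2 ∧
      (∀ j, f s (z.2 j) = z.1) ∧
      (∀ j : Fin k, f (s+1) (z.2 j) = k * (z.1 - 1) + (j : ℕ) + 2) ∧
      (∀ i : Fin M, (∀ j, i ≠ z.2 j) → f (s+1) i = f s i) := by
    intro s hs
    obtain ⟨v, t, h1, h2, h3, h4⟩ := hstep s hs
    exact ⟨(v, t), h1, h2, h3, h4⟩
  choose z hz1 hz2 hz3 hz4 using hch
  refine ⟨⟨n, f,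
    (fun s => if hs : s < n then (z s hs).1 else 1),
    (fun s => if hs : s < n then (z s hs).2 else fun _ => ⟨0, hM⟩),
    h0, hcst, ?_, ?_, ?_, ?_⟩, hn⟩
  · intro s hs; simpa [dif_pos hs] using hz1 s hs
  · intro s hs j; simpa [dif_pos hs] using hz2 s hs j
  · intro s hs j; simpa [dif_pos hs] using hz3 s hs j
  · intro s hs i hi; refine hz4 s hs i ?_; intro j; have := hi j; simpa [dif_pos hs] using this

variable {k M : ℕ} (R : Run k M)

lemma Run.cases (s : ℕ) (i : Fin M) :
    R.f (s+1) i = R.f s i ∨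
      (s < R.n ∧ ∃ j, R.tt s j = i ∧ R.f s i = R.vv s ∧
        R.f (s+1) i = k * (R.vv s - 1) + (j : ℕ) + 2) := by
  classical
  by_cases hs : s < R.n
  · by_cases hj : ∃ j, R.tt s j = i
    · obtain ⟨j, hj⟩ := hj
      exact Or.inr ⟨hs, j, hj, by rw [← hj]; exact R.hat s hs j, by rw [← hj]; exact R.hfire s hs j⟩
    · exact Or.inl (R.hstay s hs i (fun j h => hj ⟨j, h.symm⟩))
  · left
    rw [R.hconst (s+1) (by omega), R.hconst s (by omega)]

lemma Run.pos (s : ℕ) (i : Fin M) : 1 ≤ R.f s i := by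
  induction s with
  | zero => rw [R.h0]
  | succ s ih =>
    rcases R.cases s i with h | ⟨_, j, _, _, h⟩ <;> rw [h] <;> omega

lemma Run.sub_step (hk : 1 ≤ k) (s : ℕ) (i : Fin M) : Sub k (R.f s i) (R.f (s+1) i) := by
  rcases R.cases s i with h | ⟨hs, j, hj, hv, h⟩
  · rw [h]; exact sub_refl k _
  · rw [h, hv]
    exact sub_child k (R.vv s) (j : ℕ) hk (hv ▸ R.pos s i) j.isLt

lemma Run.sub_le (hk : 1 ≤ k) {s s' : ℕ} (h : s ≤ s') (i : Fin M) :
    Sub k (R.f s i) (R.f s' i) := by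
  induction s', h using Nat.le_induction with
  | base => exact sub_refl k _
  | succ s' hs ih => exact sub_trans ih (R.sub_step hk s' i)

lemma Run.fired (hk : 1 ≤ k) {s : ℕ} {j : Fin k} {i : Fin M} (hs : s < R.n) (hj : R.tt s j = i) :
    R.f s i = R.vv s ∧ R.f (s+1) i = k * (R.vv s - 1) + (j : ℕ) + 2 ∧
      depth k (R.f (s+1) i) = depth k (R.f s i) + 1 := by
  have h1 : R.f s i = R.vv s := by rw [← hj]; exact R.hat s hs j
  have h2 : R.f (s+1) i = k * (R.vv s - 1) + (j : ℕ) + 2 := by rw [← hj]; exact R.hfire s hs j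
  refine ⟨h1, h2, ?_⟩
  rw [h1, h2, depth_child k (R.vv s) (j : ℕ) hk (h1 ▸ R.pos s i) j.isLt]

lemma Run.exit_unique (hk : 1 ≤ k) {s1 s2 : ℕ} {j1 j2 : Fin k} {x : Fin M}
    (h1 : s1 < R.n) (h2 : s2 < R.n) (e1 : R.tt s1 j1 = x) (e2 : R.tt s2 j2 = x)
    (hv : R.f s1 x = R.f s2 x) : s1 = s2 ∧ j1 = j2 := by
  have key : ∀ (a b : ℕ) (ja jb : Fin k), a < R.n → R.tt a ja = x → R.tt b jb = x →
      R.f a x = R.f b x → ¬ a < b := by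
    intro a b ja jb ha ea eb hab hlt
    have hd := (R.fired hk ha ea).2.2
    have hle := (R.sub_le hk (show a+1 ≤ b by omega) x).1
    have : depth k (R.f a x) = depth k (R.f b x) := by rw [hab]
    omega
  have hss : s1 = s2 := by
    rcases lt_trichotomy s1 s2 with h | h | h
    · exact absurd h (key s1 s2 j1 j2 h1 e1 e2 hv)
    · exact h
    · exact absurd h (key s2 s1 j2 j1 h2 e2 e1 hv.symm)
  subst hss
  exact ⟨rfl, (R.hmono s1 h1).injective (e1.trans e2.symm)⟩

def Run.IsSep (x y : Fin M) (sx : ℕ) (jx : Fin k) (sy : ℕ) (jy : Fin k) : Prop :=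
  sx < R.n ∧ sy < R.n ∧ R.tt sx jx = x ∧ R.tt sy jy = y ∧ R.vv sx = R.vv sy ∧ jx ≠ jy

lemma Run.sub_of_two_fires (hk : 1 ≤ k) {z : Fin M} {a b : ℕ} {ja jb : Fin k}
    (ha : a < R.n) (hb : b < R.n) (ea : R.tt a ja = z) (eb : R.tt b jb = z)
    (hd : depth k (R.vv a) < depth k (R.vv b)) :
    Sub k (k * (R.vv a - 1) + (ja : ℕ) + 2) (R.vv b) := by
  have hfa : R.f a z = R.vv a := (R.fired hk ha ea).1
  have hfb : R.f b z = R.vv b := (R.fired hk hb eb).1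
  have hab : a < b := by
    by_contra h
    push_neg at h
    have := (R.sub_le hk h z).1
    rw [hfa, hfb] at this
    omega
  have h1 := (R.fired hk ha ea).2.1
  have h2 := R.sub_le hk (show a+1 ≤ b by omega) z
  rw [h1, hfb] at h2
  exact h2

lemma Run.no_deeper (hk : 1 ≤ k) {x y : Fin M} {s1 s1' s2 s2' : ℕ} {j1 j1' j2 j2' : Fin k}
    (hA : R.IsSep x y s1 j1 s1' j1') (hB : R.IsSep x y s2 j2 s2' j2')
    (hd : depth k (R.vv s1) < depth k (R.vv s2)) : False := by
  obtain ⟨ha1, ha2, ha3, ha4, ha5, ha6⟩ := hA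
  obtain ⟨hb1, hb2, hb3, hb4, hb5, hb6⟩ := hB
  have hsx := R.sub_of_two_fires hk ha1 hb1 ha3 hb3 hd
  have hd' : depth k (R.vv s1') < depth k (R.vv s2') := by rwa [← ha5, ← hb5]
  have hsy := R.sub_of_two_fires hk ha2 hb2 ha4 hb4 hd'
  rw [← ha5] at hsy
  rw [← hb5] at hsy
  have hv1 : 1 ≤ R.vv s1 := by
    have := (R.fired hk ha1 ha3).1
    have := R.pos s1 x
    omega
  have heq := sub_unique hsx hsy (by
    rw [depth_child k (R.vv s1) (j1 : ℕ) hk hv1 j1.isLt,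
      depth_child k (R.vv s1) (j1' : ℕ) hk hv1 j1'.isLt])
  have : (j1 : ℕ) = (j1' : ℕ) := by omega
  exact ha6 (Fin.ext this)

lemma Run.sep_unique (hk : 1 ≤ k) {x y : Fin M} {s1 s1' s2 s2' : ℕ} {j1 j1' j2 j2' : Fin k}
    (hA : R.IsSep x y s1 j1 s1' j1') (hB : R.IsSep x y s2 j2 s2' j2') :
    s1 = s2 ∧ j1 = j2 ∧ s1' = s2' ∧ j1' = j2' := by
  obtain ⟨ha1, ha2, ha3, ha4, ha5, ha6⟩ := hA
  obtain ⟨hb1, hb2, hb3, hb4, hb5, hb6⟩ := hB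
  have hvx1 : R.f s1 x = R.vv s1 := (R.fired hk ha1 ha3).1
  have hvx2 : R.f s2 x = R.vv s2 := (R.fired hk hb1 hb3).1
  have hvy1 : R.f s1' y = R.vv s1' := (R.fired hk ha2 ha4).1
  have hvy2 : R.f s2' y = R.vv s2' := (R.fired hk hb2 hb4).1
  have hvv : R.vv s1 = R.vv s2 := by
    rcases lt_trichotomy (depth k (R.vv s1)) (depth k (R.vv s2)) with hd | hd | hd
    · exact absurd (R.no_deeper hk ⟨ha1, ha2, ha3, ha4, ha5, ha6⟩ ⟨hb1, hb2, hb3, hb4, hb5, hb6⟩ hd) (by simp)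
    · rcases le_total s1 s2 with h | h
      · have := R.sub_le hk h x
        rw [hvx1, hvx2] at this
        exact sub_eq_of_depth this hd
      · have := R.sub_le hk h x
        rw [hvx1, hvx2] at this
        exact (sub_eq_of_depth this hd.symm).symm
    · exact absurd (R.no_deeper hk ⟨hb1, hb2, hb3, hb4, hb5, hb6⟩ ⟨ha1, ha2, ha3, ha4, ha5, ha6⟩ hd) (by simp)
  have hx := R.exit_unique hk ha1 hb1 ha3 hb3 (by rw [hvx1, hvx2, hvv])
  have hy := R.exit_unique hk ha2 hb2 ha4 hb4 (by rw [hvy1, hvy2, ← ha5, ← hb5, hvv])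
  exact ⟨hx.1, hx.2, hy.1, hy.2⟩

lemma Run.exit {x : Fin M} {w s : ℕ} (hs : s ≤ R.n) (hx : R.f s x = w)
    (hnx : R.f R.n x ≠ w) :
    ∃ (e : ℕ) (j : Fin k), e < R.n ∧ R.tt e j = x ∧ R.vv e = w := by
  classical
  have hsn : s < R.n := by
    rcases lt_or_eq_of_le hs with h | h
    · exact h
    · subst h; exact absurd hx hnx
  set S := (Finset.range R.n).filter (fun u => s ≤ u ∧ R.f u x = w) with hS
  have hSne : S.Nonempty := ⟨s, by simp [hS, hsn, hx]⟩
  set e := S.max' hSne with he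
  have hem : e ∈ S := S.max'_mem hSne
  rw [hS, Finset.mem_filter, Finset.mem_range] at hem
  obtain ⟨hen, hse, hfe⟩ := hem
  have hne1 : R.f (e+1) x ≠ w := by
    intro hcon
    rcases lt_or_eq_of_le (Nat.succ_le_of_lt hen) with h | h
    · have : e + 1 ∈ S := by simp [hS, h, hcon]; omega
      have := S.le_max' _ this
      omega
    · rw [← h] at hnx; exact hnx hcon
  rcases R.cases e x with h | ⟨he', j, hj, hv, _⟩
  · exact absurd (h.trans hfe) hne1
  · exact ⟨e, j, he', hj, by rw [← hv, hfe]⟩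

lemma Run.sep_exists (hk : 1 ≤ k) {ℓ : ℕ} (hd : ∀ i, depth k (R.f R.n i) = ℓ)
    {x y : Fin M} (hne : R.f R.n x ≠ R.f R.n y) :
    ∃ (sx : ℕ) (jx : Fin k) (sy : ℕ) (jy : Fin k), R.IsSep x y sx jx sy jy := by
  suffices H : ∀ (r w s s' : ℕ), ℓ - depth k w = r → R.f s x = w → R.f s' y = w →
      ∃ (sx : ℕ) (jx : Fin k) (sy : ℕ) (jy : Fin k), R.IsSep x y sx jx sy jy by
    refine H (ℓ - depth k 1) 1 0 0 rfl ?_ ?_ <;> rw [R.h0]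
  intro r
  induction r using Nat.strong_induction_on with
  | _ r ih =>
    intro w s s' hr hx hy
    -- normalize times to be ≤ n
    obtain ⟨a, han, hax⟩ : ∃ a, a ≤ R.n ∧ R.f a x = w := by
      rcases le_total s R.n with h | h
      · exact ⟨s, h, hx⟩
      · exact ⟨R.n, le_rfl, by rw [← R.hconst s h]; exact hx⟩
    obtain ⟨b, hbn, hby⟩ : ∃ b, b ≤ R.n ∧ R.f b y = w := by
      rcases le_total s' R.n with h | h
      · exact ⟨s', h, hy⟩
      · exact ⟨R.n, le_rfl, by rw [← R.hconst s' h]; exact hy⟩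
    have hsubx : Sub k w (R.f R.n x) := hax ▸ R.sub_le hk han x
    have hsuby : Sub k w (R.f R.n y) := hby ▸ R.sub_le hk hbn y
    have hdw : depth k w ≤ ℓ := by have := hsubx.1; rwa [hd x] at this
    have hdlt : depth k w < ℓ := by
      rcases lt_or_eq_of_le hdw with h | h
      · exact h
      · exfalso
        have e1 : w = R.f R.n x := sub_eq_of_depth hsubx (by rw [hd x, h])
        have e2 : w = R.f R.n y := sub_eq_of_depth hsuby (by rw [hd y, h])
        exact hne (e1 ▸ e2 ▸ rfl)
    have hnx : R.f R.n x ≠ w := fun hcon => by rw [← hcon, hd x] at hdlt; omega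
    have hny : R.f R.n y ≠ w := fun hcon => by rw [← hcon, hd y] at hdlt; omega
    obtain ⟨ex, jx, hex, hjx, hvx⟩ := R.exit han hax hnx
    obtain ⟨ey, jy, hey, hjy, hvy⟩ := R.exit hbn hby hny
    by_cases hjj : jx = jy
    · -- both go to the same child, recurse
      subst hjj
      have hw1 : 1 ≤ w := hax ▸ R.pos a x
      have hcx : R.f (ex+1) x = k * (w - 1) + (jx : ℕ) + 2 := by
        rw [(R.fired hk hex hjx).2.1, hvx]
      have hcy : R.f (ey+1) y = k * (w - 1) + (jx : ℕ) + 2 := by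
        rw [(R.fired hk hey hjy).2.1, hvy]
      have hdc : depth k (k * (w - 1) + (jx : ℕ) + 2) = depth k w + 1 :=
        depth_child k w (jx : ℕ) hk hw1 jx.isLt
      exact ih (ℓ - depth k (k * (w - 1) + (jx : ℕ) + 2)) (by omega) _ (ex+1) (ey+1) rfl hcx hcy
    · exact ⟨ex, jx, ey, jy, hex, hey, hjx, hjy, by rw [hvx, hvy], hjj⟩

lemma Run.pos_lt (hk : 1 ≤ k) {ℓ px py : ℕ} (hpx : px < k ^ ℓ) (hpy : py < k ^ ℓ)
    {x y : Fin M} {sx sy : ℕ} {jx jy : Fin k} (hS : R.IsSep x y sx jx sy jy)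
    (hfx : R.f R.n x = layerStart k ℓ + px) (hfy : R.f R.n y = layerStart k ℓ + py)
    (hj : (jx : ℕ) < (jy : ℕ)) : px < py := by
  obtain ⟨h1, h2, h3, h4, h5, h6⟩ := hS
  have hvx : R.f sx x = R.vv sx := (R.fired hk h1 h3).1
  have hv1 : 1 ≤ R.vv sx := hvx ▸ R.pos sx x
  have hux : R.f (sx+1) x = k * (R.vv sx - 1) + (jx : ℕ) + 2 := (R.fired hk h1 h3).2.1
  have huy : R.f (sy+1) y = k * (R.vv sx - 1) + (jy : ℕ) + 2 := by
    rw [(R.fired hk h2 h4).2.1, ← h5]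
  have hsubx : Sub k (k * (R.vv sx - 1) + (jx : ℕ) + 2) (layerStart k ℓ + px) := by
    rw [← hfx, ← hux]; exact R.sub_le hk (by omega) x
  have hsuby : Sub k (k * (R.vv sx - 1) + (jy : ℕ) + 2) (layerStart k ℓ + py) := by
    rw [← hfy, ← huy]; exact R.sub_le hk (by omega) y
  have hdx : depth k (k * (R.vv sx - 1) + (jx : ℕ) + 2) = depth k (R.vv sx) + 1 :=
    depth_child k _ _ hk hv1 jx.isLt
  have hdy : depth k (k * (R.vv sx - 1) + (jy : ℕ) + 2) = depth k (R.vv sx) + 1 :=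
    depth_child k _ _ hk hv1 jy.isLt
  have ex := sub_layer hk hpx hsubx
  have ey := sub_layer hk hpy hsuby
  rw [hdx] at ex
  rw [hdy] at ey
  have hlt : k * (R.vv sx - 1) + (jx : ℕ) + 2 < k * (R.vv sx - 1) + (jy : ℕ) + 2 := by omega
  rw [ex, ey] at hlt
  have hdiv : px / k ^ (ℓ - (depth k (R.vv sx) + 1)) < py / k ^ (ℓ - (depth k (R.vv sx) + 1)) := by
    omega
  by_contra h
  push_neg at h
  exact absurd (Nat.div_le_div_right (c := k ^ (ℓ - (depth k (R.vv sx) + 1))) h) (by omega)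


lemma two_mul_card_lt (m : ℕ) :
    2 * ((Finset.univ : Finset (Fin m × Fin m)).filter fun q => q.1 < q.2).card + m = m * m := by
  classical
  have hswap : ((Finset.univ : Finset (Fin m × Fin m)).filter fun q => q.1 < q.2).card
      = ((Finset.univ : Finset (Fin m × Fin m)).filter fun q => q.2 < q.1).card := by
    apply Finset.card_bij (fun q _ => (q.2, q.1))
    · intro a ha
      simp only [Finset.mem_filter, Finset.mem_univ, true_and] at ha ⊢
      exact ha
    · intro a _ b _ h
      have h1 : a.2 = b.2 := congrArg Prod.fst h
      have h2 : a.1 = b.1 := congrArg Prod.snd h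
      exact Prod.ext h2 h1
    · intro b hb
      simp only [Finset.mem_filter, Finset.mem_univ, true_and] at hb
      exact ⟨(b.2, b.1), by simpa using hb, rfl⟩
  have hdiag : ((Finset.univ : Finset (Fin m × Fin m)).filter fun q => q.1 = q.2).card = m := by
    have hd2 : ((Finset.univ : Finset (Fin m × Fin m)).filter fun q => q.1 = q.2).card
        = (Finset.univ : Finset (Fin m)).card := by
      apply Finset.card_bij (fun q _ => q.1)
      · intro a _; exact Finset.mem_univ _
      · intro a ha b hb h
        simp only [Finset.mem_filter, Finset.mem_univ, true_and] at ha hb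
        refine Prod.ext h ?_
        rw [← ha, ← hb]
        exact h
      · intro b _
        exact ⟨(b, b), by simp, rfl⟩
    rw [hd2]
    simp
  have hsplit := Finset.card_filter_add_card_filter_not
    (s := (Finset.univ : Finset (Fin m × Fin m))) (p := fun q => q.1 < q.2)
  have huniv : (Finset.univ : Finset (Fin m × Fin m)).card = m * m := by simp
  have hneg : ((Finset.univ : Finset (Fin m × Fin m)).filter fun q => ¬ q.1 < q.2)
      = ((Finset.univ : Finset (Fin m × Fin m)).filter fun q => q.2 < q.1)
        ∪ ((Finset.univ : Finset (Fin m × Fin m)).filter fun q => q.1 = q.2) := by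
    ext q
    simp only [Finset.mem_filter, Finset.mem_union, Finset.mem_univ, true_and]
    constructor
    · intro h
      rcases lt_or_eq_of_le (not_lt.mp h) with h' | h'
      · exact Or.inl h'
      · exact Or.inr h'.symm
    · rintro (h | h)
      · exact not_lt.mpr h.le
      · exact not_lt.mpr h.ge
  have hdisj : Disjoint
      ((Finset.univ : Finset (Fin m × Fin m)).filter fun q => q.2 < q.1)
      ((Finset.univ : Finset (Fin m × Fin m)).filter fun q => q.1 = q.2) := by
    rw [Finset.disjoint_left]
    intro q hq1 hq2
    simp only [Finset.mem_filter, Finset.mem_univ, true_and] at hq1 hq2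
    exact absurd hq2.symm (ne_of_lt hq1)
  rw [hneg, Finset.card_union_of_disjoint hdisj, hdiag, ← hswap, huniv] at hsplit
  omega

end Stmt8Aux

open Stmt8Aux in
/-- Every permutation attainable from `k^ℓ` chips has at most
`(k^(2ℓ) - ℓ·k^(ℓ+1) + (ℓ-1)·k^ℓ)/4` inversions. -/
theorem stmt8 (k ℓ : ℕ) (hk : 2 ≤ k) (hℓ : 1 ≤ ℓ)
    (σ : Equiv.Perm (Fin (k ^ ℓ))) (hσ : Attainable k ℓ σ) :
    ((Finset.univ.filter (fun q : Fin (k ^ ℓ) × Fin (k ^ ℓ) =>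
        q.1 < q.2 ∧ σ q.2 < σ q.1)).card : ℤ) ≤
      ((k : ℤ) ^ (2 * ℓ) - (ℓ : ℤ) * (k : ℤ) ^ (ℓ + 1) + ((ℓ : ℤ) - 1) * (k : ℤ) ^ ℓ) / 4 := by
  classical
  obtain ⟨c, hreach, _, hpos⟩ := hσ
  have hk1 : 1 ≤ k := by omega
  have hM : 0 < k ^ ℓ := pow_pos (by omega) ℓ
  obtain ⟨R, hRc⟩ := exists_run hM hreach
  have hfin : ∀ i : Fin (k ^ ℓ), R.f R.n i = layerStart k ℓ + ((σ.symm i : Fin (k ^ ℓ)) : ℕ) := by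
    intro i
    rw [hRc]
    have := hpos (σ.symm i)
    rwa [Equiv.apply_symm_apply] at this
  have hdep : ∀ i, depth k (R.f R.n i) = ℓ := fun i => by
    rw [hfin i]; exact depth_layerStart k hk1 ℓ _ (σ.symm i).isLt
  have hfne : ∀ x y : Fin (k ^ ℓ), x ≠ y → R.f R.n x ≠ R.f R.n y := by
    intro x y hxy hcon
    rw [hfin x, hfin y] at hcon
    exact hxy (σ.symm.injective (Fin.ext (by omega)))
  have hsep_ex : ∀ q : Fin (k ^ ℓ) × Fin (k ^ ℓ), q.1 ≠ q.2 →
      ∃ z : ℕ × Fin k × ℕ × Fin k, R.IsSep q.1 q.2 z.1 z.2.1 z.2.2.1 z.2.2.2 := by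
    intro q h
    obtain ⟨a, b, c', d, hh⟩ := R.sep_exists hk1 hdep (hfne _ _ h)
    exact ⟨(a, b, c', d), hh⟩
  obtain ⟨Sep, hSep⟩ : ∃ Sep : Fin (k ^ ℓ) × Fin (k ^ ℓ) → ℕ × Fin k × ℕ × Fin k,
      ∀ q, q.1 ≠ q.2 → R.IsSep q.1 q.2 (Sep q).1 (Sep q).2.1 (Sep q).2.2.1 (Sep q).2.2.2 :=
    ⟨fun q => if h : q.1 ≠ q.2 then (hsep_ex q h).choose
      else (0, ⟨0, by omega⟩, 0, ⟨0, by omega⟩),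
     fun q h => by simpa only [dif_pos h] using (hsep_ex q h).choose_spec⟩
  -- the five finsets
  set P : Finset (Fin (k ^ ℓ) × Fin (k ^ ℓ)) :=
    Finset.univ.filter (fun q => q.1 < q.2) with hP
  set Inv : Finset (Fin (k ^ ℓ) × Fin (k ^ ℓ)) :=
    Finset.univ.filter (fun q => q.1 < q.2 ∧ σ.symm q.2 < σ.symm q.1) with hInv
  set Cross : Finset (Fin (k ^ ℓ) × Fin (k ^ ℓ)) :=
    Finset.univ.filter (fun q => q.1 < q.2 ∧ (Sep q).1 ≠ (Sep q).2.2.1) with hCross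
  set Good : Finset (Fin (k ^ ℓ) × Fin (k ^ ℓ)) :=
    Finset.univ.filter (fun q => q.1 < q.2 ∧ (Sep q).1 ≠ (Sep q).2.2.1
      ∧ ¬ (σ.symm q.2 < σ.symm q.1)) with hGood
  set Sm : Finset (Fin (k ^ ℓ) × Fin (k ^ ℓ)) :=
    Finset.univ.filter (fun q => q.1 < q.2 ∧ (Sep q).1 = (Sep q).2.2.1) with hSm
  -- inverted pairs have the bigger slot on the first (smaller-labeled) chip
  have key : ∀ q : Fin (k ^ ℓ) × Fin (k ^ ℓ), q.1 < q.2 → σ.symm q.2 < σ.symm q.1 →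
      ((Sep q).2.2.2 : ℕ) < ((Sep q).2.1 : ℕ) := by
    intro q hq1 hq2
    have hS := hSep q (ne_of_lt hq1)
    rcases lt_trichotomy ((Sep q).2.1 : ℕ) ((Sep q).2.2.2 : ℕ) with h | h | h
    · exfalso
      have hlt := R.pos_lt hk1 (σ.symm q.1).isLt (σ.symm q.2).isLt hS (hfin q.1) (hfin q.2) h
      have h2 : ((σ.symm q.2 : Fin (k ^ ℓ)) : ℕ) < ((σ.symm q.1 : Fin (k ^ ℓ)) : ℕ) := hq2
      omega
    · exact absurd (Fin.ext h) hS.2.2.2.2.2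
    · exact h
  -- inverted pairs are cross-event
  have hInvCross : ∀ q : Fin (k ^ ℓ) × Fin (k ^ ℓ), q.1 < q.2 → σ.symm q.2 < σ.symm q.1 →
      (Sep q).1 ≠ (Sep q).2.2.1 := by
    intro q hq1 hq2 hcon
    have hS := hSep q (ne_of_lt hq1)
    have hj := key q hq1 hq2
    obtain ⟨h1, h2, h3, h4, h5, h6⟩ := hS
    rw [← hcon] at h4
    have hlt : R.tt (Sep q).1 (Sep q).2.2.2 < R.tt (Sep q).1 (Sep q).2.1 :=
      (R.hmono _ h1) (show (Sep q).2.2.2 < (Sep q).2.1 from hj)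
    rw [h4, h3] at hlt
    exact absurd hlt (not_lt.mpr hq1.le)
  -- the injection from inverted pairs to good pairs
  have hmain : ∀ q ∈ Inv,
      ((R.tt (Sep q).1 (Sep q).2.2.2, R.tt (Sep q).2.2.1 (Sep q).2.1) ∈ Good) ∧
      R.IsSep (R.tt (Sep q).1 (Sep q).2.2.2) (R.tt (Sep q).2.2.1 (Sep q).2.1)
        (Sep q).1 (Sep q).2.2.2 (Sep q).2.2.1 (Sep q).2.1 := by
    intro q hq
    rw [hInv, Finset.mem_filter] at hq
    obtain ⟨-, hq1, hq2⟩ := hq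
    have hS := hSep q (ne_of_lt hq1)
    have hj := key q hq1 hq2
    obtain ⟨h1, h2, h3, h4, h5, h6⟩ := hS
    have hx' : R.tt (Sep q).1 (Sep q).2.2.2 < q.1 := by
      have := (R.hmono _ h1) (show (Sep q).2.2.2 < (Sep q).2.1 from hj)
      rwa [h3] at this
    have hy' : q.2 < R.tt (Sep q).2.2.1 (Sep q).2.1 := by
      have := (R.hmono _ h2) (show (Sep q).2.2.2 < (Sep q).2.1 from hj)
      rwa [h4] at this
    have hlt : R.tt (Sep q).1 (Sep q).2.2.2 < R.tt (Sep q).2.2.1 (Sep q).2.1 :=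
      lt_trans (lt_trans hx' hq1) hy'
    have hIs : R.IsSep (R.tt (Sep q).1 (Sep q).2.2.2) (R.tt (Sep q).2.2.1 (Sep q).2.1)
        (Sep q).1 (Sep q).2.2.2 (Sep q).2.2.1 (Sep q).2.1 :=
      ⟨h1, h2, rfl, rfl, h5, fun hh => by
        have := congrArg (fun z : Fin k => (z : ℕ)) hh
        omega⟩
    refine ⟨?_, hIs⟩
    have hS' := hSep (R.tt (Sep q).1 (Sep q).2.2.2, R.tt (Sep q).2.2.1 (Sep q).2.1)
      (ne_of_lt hlt)
    have huniq := R.sep_unique hk1 hS' hIs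
    have hnotinv : ((σ.symm (R.tt (Sep q).1 (Sep q).2.2.2) : Fin (k ^ ℓ)) : ℕ)
        < ((σ.symm (R.tt (Sep q).2.2.1 (Sep q).2.1) : Fin (k ^ ℓ)) : ℕ) :=
      R.pos_lt hk1 (σ.symm _).isLt (σ.symm _).isLt hIs (hfin _) (hfin _) hj
    rw [hGood, Finset.mem_filter]
    refine ⟨Finset.mem_univ _, hlt, ?_, ?_⟩
    · rw [huniq.1, huniq.2.2.1]
      exact hInvCross q hq1 hq2
    · intro hcon
      have : ((σ.symm (R.tt (Sep q).2.2.1 (Sep q).2.1) : Fin (k ^ ℓ)) : ℕ)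
          < ((σ.symm (R.tt (Sep q).1 (Sep q).2.2.2) : Fin (k ^ ℓ)) : ℕ) := hcon
      omega
  have hIG : Inv.card ≤ Good.card := by
    apply Finset.card_le_card_of_injOn
      (fun q => (R.tt (Sep q).1 (Sep q).2.2.2, R.tt (Sep q).2.2.1 (Sep q).2.1))
      (fun q hq => (hmain q hq).1)
    intro q hq q' hq' heq
    simp only at heq
    have hx : R.tt (Sep q).1 (Sep q).2.2.2 = R.tt (Sep q').1 (Sep q').2.2.2 :=
      congrArg (fun z : Fin (k ^ ℓ) × Fin (k ^ ℓ) => z.1) heq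
    have hy : R.tt (Sep q).2.2.1 (Sep q).2.1 = R.tt (Sep q').2.2.1 (Sep q').2.1 :=
      congrArg (fun z : Fin (k ^ ℓ) × Fin (k ^ ℓ) => z.2) heq
    have hqm := Finset.mem_coe.mp hq
    have hqm' := Finset.mem_coe.mp hq'
    have hA := (hmain q hqm).2
    have hB := (hmain q' hqm').2
    rw [hx, hy] at hA
    have huniq := R.sep_unique hk1 hA hB
    rw [hInv, Finset.mem_filter] at hqm hqm'
    have e1 : q.1 = q'.1 := by
      rw [← (hSep q (ne_of_lt hqm.2.1)).2.2.1, ← (hSep q' (ne_of_lt hqm'.2.1)).2.2.1,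
        huniq.1, huniq.2.2.2]
    have e2 : q.2 = q'.2 := by
      rw [← (hSep q (ne_of_lt hqm.2.1)).2.2.2.1, ← (hSep q' (ne_of_lt hqm'.2.1)).2.2.2.1,
        huniq.2.2.1, huniq.2.1]
    exact Prod.ext e1 e2
  have hGI : Disjoint Inv Good := by
    rw [Finset.disjoint_left]
    intro q hq hq'
    rw [hInv, Finset.mem_filter] at hq
    rw [hGood, Finset.mem_filter] at hq'
    exact hq'.2.2.2 hq.2.2
  have hsubC : Inv ∪ Good ⊆ Cross := by
    intro q hq
    rw [Finset.mem_union] at hq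
    rw [hCross, Finset.mem_filter]
    rcases hq with hq | hq
    · rw [hInv, Finset.mem_filter] at hq
      exact ⟨Finset.mem_univ _, hq.2.1, hInvCross q hq.2.1 hq.2.2⟩
    · rw [hGood, Finset.mem_filter] at hq
      exact ⟨Finset.mem_univ _, hq.2.1, hq.2.2.1⟩
  have h2I : Inv.card + Good.card ≤ Cross.card := by
    rw [← Finset.card_union_of_disjoint hGI]
    exact Finset.card_le_card hsubC
  -- same-event pairs
  set Pk : Finset (Fin k × Fin k) := Finset.univ.filter (fun z => z.1 < z.2) with hPk
  have hSmCard : Sm.card = ((Finset.range R.n) ×ˢ Pk).card := by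
    apply Finset.card_bij (fun q _ => ((Sep q).1, ((Sep q).2.1, (Sep q).2.2.2)))
    · intro q hq
      rw [hSm, Finset.mem_filter] at hq
      obtain ⟨-, hq1, hq2⟩ := hq
      have hS := hSep q (ne_of_lt hq1)
      obtain ⟨h1, h2, h3, h4, h5, h6⟩ := hS
      rw [Finset.mem_product, Finset.mem_range]
      refine ⟨h1, ?_⟩
      rw [hPk, Finset.mem_filter]
      refine ⟨Finset.mem_univ _, ?_⟩
      have := hq1
      rw [← h3, ← h4, ← hq2] at this
      exact (R.hmono _ h1).lt_iff_lt.mp this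
    · intro q hq q' hq' heq
      rw [hSm, Finset.mem_filter] at hq hq'
      have hS := hSep q (ne_of_lt hq.2.1)
      have hS' := hSep q' (ne_of_lt hq'.2.1)
      have e0 : (Sep q).1 = (Sep q').1 := congrArg (fun z : ℕ × Fin k × Fin k => z.1) heq
      have e1 : (Sep q).2.1 = (Sep q').2.1 := congrArg (fun z : ℕ × Fin k × Fin k => z.2.1) heq
      have e2 : (Sep q).2.2.2 = (Sep q').2.2.2 := congrArg (fun z : ℕ × Fin k × Fin k => z.2.2) heq
      refine Prod.ext ?_ ?_
      · rw [← hS.2.2.1, ← hS'.2.2.1, e0, e1]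
      · rw [← hS.2.2.2.1, ← hS'.2.2.2.1, ← hq.2.2, ← hq'.2.2, e0, e2]
    · intro b hb
      rw [Finset.mem_product, Finset.mem_range] at hb
      obtain ⟨hbn, hbPk⟩ := hb
      rw [hPk, Finset.mem_filter] at hbPk
      have hblt := hbPk.2
      have hq1 : R.tt b.1 b.2.1 < R.tt b.1 b.2.2 := (R.hmono _ hbn) hblt
      have hIs : R.IsSep (R.tt b.1 b.2.1) (R.tt b.1 b.2.2) b.1 b.2.1 b.1 b.2.2 :=
        ⟨hbn, hbn, rfl, rfl, rfl, ne_of_lt hblt⟩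
      have hS := hSep (R.tt b.1 b.2.1, R.tt b.1 b.2.2) (ne_of_lt hq1)
      have huniq := R.sep_unique hk1 hS hIs
      refine ⟨(R.tt b.1 b.2.1, R.tt b.1 b.2.2), ?_, ?_⟩
      · rw [hSm, Finset.mem_filter]
        exact ⟨Finset.mem_univ _, hq1, by rw [huniq.1, huniq.2.2.1]⟩
      · rw [huniq.1, huniq.2.1, huniq.2.2.2]
  -- partition of P into Sm and Cross
  have hPart : Sm.card + Cross.card = P.card := by
    have e1 : Sm = P.filter (fun q => (Sep q).1 = (Sep q).2.2.1) := by
      rw [hP, Finset.filter_filter, hSm]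
    have e2 : Cross = P.filter (fun q => ¬ (Sep q).1 = (Sep q).2.2.1) := by
      rw [hP, Finset.filter_filter, hCross]
    rw [e1, e2]
    exact Finset.card_filter_add_card_filter_not _
  -- counting firing steps by total depth
  have hsum : ∀ s, s ≤ R.n → ∑ i, depth k (R.f s i) = k * s := by
    intro s
    induction s with
    | zero => intro _; simp [R.h0, depth_one]
    | succ s ih =>
      intro hs
      have hs' : s < R.n := by omega
      have hrec := ih (by omega)
      set T : Finset (Fin (k ^ ℓ)) := Finset.univ.image (R.tt s) with hT
      have hv1 : 1 ≤ R.vv s := by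
        have h1 := R.hat s hs' ⟨0, by omega⟩
        have h2 := R.pos s (R.tt s ⟨0, by omega⟩)
        omega
      have h1 : ∑ i ∈ T, depth k (R.f (s+1) i)
          = ∑ j : Fin k, depth k (R.f (s+1) (R.tt s j)) :=
        Finset.sum_image (fun a _ b _ h => (R.hmono s hs').injective h)
      have h2 : ∑ i ∈ T, depth k (R.f s i)
          = ∑ j : Fin k, depth k (R.f s (R.tt s j)) :=
        Finset.sum_image (fun a _ b _ h => (R.hmono s hs').injective h)
      have h3 : ∑ j : Fin k, depth k (R.f (s+1) (R.tt s j)) = k * (depth k (R.vv s) + 1) := by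
        rw [Finset.sum_congr rfl (fun j _ => by
          rw [R.hfire s hs' j, depth_child k _ _ hk1 hv1 j.isLt])]
        simp [Finset.sum_const, mul_comm]
      have h4 : ∑ j : Fin k, depth k (R.f s (R.tt s j)) = k * depth k (R.vv s) := by
        rw [Finset.sum_congr rfl (fun j _ => by rw [R.hat s hs' j])]
        simp [Finset.sum_const, mul_comm]
      have h5 : ∑ i ∈ Tᶜ, depth k (R.f (s+1) i) = ∑ i ∈ Tᶜ, depth k (R.f s i) := by
        apply Finset.sum_congr rfl
        intro i hi
        rw [R.hstay s hs' i]
        intro j hj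
        subst hj
        exact (Finset.mem_compl.mp hi) (by rw [hT]; exact Finset.mem_image_of_mem _ (Finset.mem_univ j))
      have e1 := Finset.sum_add_sum_compl T (fun i => depth k (R.f (s+1) i))
      have e2 := Finset.sum_add_sum_compl T (fun i => depth k (R.f s i))
      rw [h1, h3, h5] at e1
      rw [h2, h4] at e2
      calc ∑ i, depth k (R.f (s+1) i)
          = k * (depth k (R.vv s) + 1) + ∑ i ∈ Tᶜ, depth k (R.f s i) := e1.symm
        _ = (k * depth k (R.vv s) + ∑ i ∈ Tᶜ, depth k (R.f s i)) + k := by ring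
        _ = k * s + k := by rw [e2, hrec]
        _ = k * (s + 1) := by ring
  have hkn : k * R.n = k ^ ℓ * ℓ := by
    have h1 := hsum R.n le_rfl
    have h2 : ∑ i : Fin (k ^ ℓ), depth k (R.f R.n i) = k ^ ℓ * ℓ := by
      rw [Finset.sum_congr rfl (fun i _ => hdep i)]
      simp [Finset.sum_const, mul_comm]
    rw [← h1, h2]
  -- cardinalities
  have hA4 : 2 * P.card + k ^ ℓ = k ^ ℓ * k ^ ℓ := two_mul_card_lt (k ^ ℓ)
  have hA5 : 2 * Pk.card + k = k * k := two_mul_card_lt k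
  have hA3 : Sm.card = R.n * Pk.card := by
    rw [hSmCard, Finset.card_product, Finset.card_range]
  have hB1 : 2 * Sm.card + k ^ ℓ * ℓ = k ^ ℓ * ℓ * k := by
    have e1 : 2 * Sm.card + R.n * k = R.n * (k * k) := by
      rw [hA3, ← hA5]; ring
    have e2 : R.n * k = k ^ ℓ * ℓ := by rw [mul_comm]; exact hkn
    have e3 : R.n * (k * k) = (R.n * k) * k := by ring
    rw [← e2, e1, e3, e2]
  have hfinal : 4 * Inv.card + k ^ ℓ * ℓ * k + k ^ ℓ ≤ k ^ ℓ * k ^ ℓ + k ^ ℓ * ℓ := by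
    have b1 : 4 * Inv.card ≤ 2 * Cross.card := by omega
    have b2 : 2 * Cross.card + 2 * Sm.card = 2 * P.card := by omega
    linarith
  -- identify the statement's count with Inv.card
  have hIcard : (Finset.univ.filter (fun q : Fin (k ^ ℓ) × Fin (k ^ ℓ) =>
      q.1 < q.2 ∧ σ q.2 < σ q.1)).card = Inv.card := by
    apply Finset.card_bij (fun q _ => (σ q.2, σ q.1))
    · intro a ha
      simp only [Finset.mem_filter, Finset.mem_univ, true_and] at ha
      rw [hInv, Finset.mem_filter]
      refine ⟨Finset.mem_univ _, ha.2, ?_⟩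
      simpa using ha.1
    · intro a _ b _ h
      have h1 : σ a.2 = σ b.2 := congrArg Prod.fst h
      have h2 : σ a.1 = σ b.1 := congrArg Prod.snd h
      exact Prod.ext (σ.injective h2) (σ.injective h1)
    · intro b hb
      rw [hInv, Finset.mem_filter] at hb
      refine ⟨(σ.symm b.2, σ.symm b.1), ?_, ?_⟩
      · simp only [Finset.mem_filter, Finset.mem_univ, true_and]
        exact ⟨hb.2.2, by simpa using hb.2.1⟩
      · simp
  rw [hIcard]
  have hz : (Inv.card : ℤ) * 4 ≤
      (k : ℤ) ^ (2 * ℓ) - (ℓ : ℤ) * (k : ℤ) ^ (ℓ + 1) + ((ℓ : ℤ) - 1) * (k : ℤ) ^ ℓ := by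
    have hc : ((4 * Inv.card + k ^ ℓ * ℓ * k + k ^ ℓ : ℕ) : ℤ)
        ≤ ((k ^ ℓ * k ^ ℓ + k ^ ℓ * ℓ : ℕ) : ℤ) := by exact_mod_cast hfinal
    push_cast at hc
    have p1 : (k : ℤ) ^ (2 * ℓ) = (k : ℤ) ^ ℓ * (k : ℤ) ^ ℓ := by rw [two_mul, pow_add]
    have p2 : (k : ℤ) ^ (ℓ + 1) = (k : ℤ) ^ ℓ * (k : ℤ) := by rw [pow_succ]
    rw [p1, p2]
    nlinarith [hc]
  set A : ℤ := (k : ℤ) ^ (2 * ℓ) - (ℓ : ℤ) * (k : ℤ) ^ (ℓ + 1) + ((ℓ : ℤ) - 1) * (k : ℤ) ^ ℓ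
    with hAdef
  omega
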